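/- Under the quadcopter translational dynamics with z₄ = tan(ψ/2), the roll angle satisfies sin φ = (2z₄ẍ − (1−z₄²)ÿ) / ((1+z₄²)·√(ẍ² + ÿ² + (z̈+g)²)). -/

import Mathlib

open Real

theorem stmt_3 (x'' y'' z'' φ θ ψ T m g z₄ : ℝ)
    (hT : 0 < T) (hm : 0 < m) (hφ : 0 < cos φ) (hθ : 0 < cos θ)
    (hψ : ψ ∈ Set.Ioo (-π) π) (hz4 : z₄ = tan (ψ / 2))
    (hx : m * x'' = T * (cos φ * sin θ * cos ψ + sin φ * sin ψ))
    (hy : m * y'' = T * (cos φ * sin θ * sin ψ - sin φ * cos ψ))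
    (hz : m * (z'' + g) = T * (cos φ * cos θ)) :
    sin φ = (2 * z₄ * x'' - (1 - z₄ ^ 2) * y'') /
      ((1 + z₄ ^ 2) * Real.sqrt (x'' ^ 2 + y'' ^ 2 + (z'' + g) ^ 2)) := by
  have hm' : (m : ℝ) ≠ 0 := ne_of_gt hm
  have hx' : x'' = T / m * (cos φ * sin θ * cos ψ + sin φ * sin ψ) := by
    field_simp; linarith [hx]
  have hy' : y'' = T / m * (cos φ * sin θ * sin ψ - sin φ * cos ψ) := by
    field_simp; linarith [hy]
  have hz' : z'' + g = T / m * (cos φ * cos θ) := by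
    field_simp; linarith [hz]
  have hr : 0 < T / m := div_pos hT hm
  have hpyth : sin ψ ^ 2 + cos ψ ^ 2 = 1 := sin_sq_add_cos_sq ψ
  have hpyth2 : sin φ ^ 2 + cos φ ^ 2 = 1 := sin_sq_add_cos_sq φ
  have hpyth3 : sin θ ^ 2 + cos θ ^ 2 = 1 := sin_sq_add_cos_sq θ
  have hsum : x'' ^ 2 + y'' ^ 2 + (z'' + g) ^ 2 = (T / m) ^ 2 := by
    rw [hx', hy', hz']
    linear_combination ((T/m)^2*(cos φ^2*sin θ^2 + sin φ^2)) * hpyth +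
      ((T/m)^2*cos φ^2) * hpyth3 + (T/m)^2 * hpyth2
  have hsqrt : Real.sqrt (x'' ^ 2 + y'' ^ 2 + (z'' + g) ^ 2) = T / m := by
    rw [hsum]; exact Real.sqrt_sq hr.le
  have hhalf : ψ / 2 ∈ Set.Ioo (-(π / 2)) (π / 2) := by
    obtain ⟨h1, h2⟩ := hψ; constructor <;> linarith
  have hc : 0 < cos (ψ / 2) := Real.cos_pos_of_mem_Ioo hhalf
  set s := sin (ψ / 2) with hs_def
  set c := cos (ψ / 2) with hc_def
  have hc' : c ≠ 0 := ne_of_gt hc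
  have hz4' : z₄ = s / c := by rw [hz4, tan_eq_sin_div_cos]
  have hsc : s ^ 2 + c ^ 2 = 1 := sin_sq_add_cos_sq (ψ / 2)
  have hsin : sin ψ = 2 * s * c := by
    rw [show ψ = 2 * (ψ / 2) by ring, Real.sin_two_mul]
  have hcos : cos ψ = c ^ 2 - s ^ 2 := by
    rw [show ψ = 2 * (ψ / 2) by ring, Real.cos_two_mul]
    linear_combination hsc
  have key : sin ψ * x'' - cos ψ * y'' = (T / m) * sin φ := by
    rw [hx', hy']
    linear_combination (T / m * sin φ) * hpyth
  have hne : (1 + z₄ ^ 2) * (T / m) ≠ 0 := by positivity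
  rw [hsqrt, eq_div_iff hne, hz4']
  have e1 : (1:ℝ) + (s / c) ^ 2 = 1 / c ^ 2 := by
    field_simp; linarith [hsc]
  rw [e1, hsin, hcos] at *
  field_simp at key ⊢
  linear_combination (-1 : ℝ) * key
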